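/- Claim 4.5: Let C ⊆ Σ₁ × ⋯ × Σₙ be a code over pairwise disjoint alphabets, let t ≤ n, let T be a decision tree, let S ⊆ Σ, let O_S : S → {0,1} be a partial oracle, and let c ∈ C be a codeword that is NOT t-queried by S (i.e., c ∉ C[S,t]). Let Q(c,O) denote the event that c is t-queried by S ∪ path(T,O). If the event 'Q(c,O) and O agrees with O_S on S' has positive probability under a uniformly random oracle O : Σ → {0,1}, then Pr[ O(c₁) = ⋯ = O(cₙ) = 0 | Q(c,O) and O agrees with O_S on S ] ≤ 2^{-(n-t)}. -/
import Mathlib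


open Finset
open scoped Classical

/-- A decision tree over symbols `σ` with outputs in `β`: each internal node queries a symbol
and branches on the answer bit, each leaf outputs an element of `β`. -/
inductive DTree (σ β : Type) : Type where
  | leaf : β → DTree σ β
  | node : σ → DTree σ β → DTree σ β → DTree σ β

namespace DTree

variable {σ β : Type}

/-- `T(O)`: the output of `T` when run on the oracle `O`. -/
def eval : DTree σ β → (σ → Bool) → β
  | .leaf b, _ => b
  | .node s t0 t1, O => if O s then eval t1 O else eval t0 O

/-- The depth of a tree: the maximum number of queries along any root-to-leaf path. -/
def depth : DTree σ β → ℕ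
  | .leaf _ => 0
  | .node _ t0 t1 => max (depth t0) (depth t1) + 1

/-- `path(T, O)`: the set of symbols queried by `T` when run on the oracle `O`. -/
def path [DecidableEq σ] : DTree σ β → (σ → Bool) → Finset σ
  | .leaf _, _ => ∅
  | .node s t0 t1, O => insert s (if O s then path t1 O else path t0 O)

end DTree

variable {Sym : Type}

/-- The set of symbols `{c₁, …, cₙ}` of a word `c`. -/
def symbSet {n : ℕ} [DecidableEq Sym] (c : Fin n → Sym) : Finset Sym :=
  Finset.univ.image c

/-- `c` is `t`-queried by `S` if `|{c₁,…,cₙ} ∩ S| ≥ t`. -/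
def tQueried {n : ℕ} [DecidableEq Sym] (t : ℕ) (S : Finset Sym) (c : Fin n → Sym) : Prop :=
  t ≤ (symbSet c ∩ S).card

/-- `C` is `(ℓ, L, t)`-list recoverable: for every set `S` of at most `ℓ` symbols,
`|C[S,t]| ≤ L`. -/
def listRecoverable {n : ℕ} [DecidableEq Sym] (C : Finset (Fin n → Sym))
    (l L t : ℕ) : Prop :=
  ∀ S : Finset Sym, S.card ≤ l → (C.filter fun c => tQueried t S c).card ≤ L

/-- `C_O := {c ∈ C : O(c₁) = ⋯ = O(cₙ) = 0}`. -/
def codeZero {n : ℕ} [DecidableEq Sym] (C : Finset (Fin n → Sym)) (O : Sym → Bool) :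
    Finset (Fin n → Sym) :=
  C.filter fun c => ∀ i, O (c i) = false

/-- A tree is valid if, on every oracle, every coordinate of its output is queried. -/
def DTree.Valid {n : ℕ} [DecidableEq Sym] (T : DTree Sym (Fin n → Sym)) : Prop :=
  ∀ O : Sym → Bool, ∀ i : Fin n, T.eval O i ∈ T.path O

/-- Probability of an event under a uniformly random oracle `O : Σ → {0,1}`. -/
noncomputable def prOracle [Fintype Sym] (p : (Sym → Bool) → Prop) : ℝ :=
  ((Finset.univ.filter fun O : Sym → Bool => p O).card : ℝ) / (Fintype.card (Sym → Bool))

section ClaimAux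

variable {β : Type} [DecidableEq Sym]

/-- Run the tree on oracle `O`, accumulating queried symbols into `P`, but stop as soon as
`cs` becomes `t`-queried by `S ∪ P`; return the accumulated set. -/
def stopPath (t : ℕ) (S cs : Finset Sym) :
    DTree Sym β → (Sym → Bool) → Finset Sym → Finset Sym
  | .leaf _, _, P => P
  | .node s t0 t1, O, P =>
      if t ≤ (cs ∩ (S ∪ P)).card then P
      else if O s then stopPath t S cs t1 O (insert s P)
      else stopPath t S cs t0 O (insert s P)

lemma subset_stopPath (t : ℕ) (S cs : Finset Sym) (T : DTree Sym β) (O : Sym → Bool)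
    (P : Finset Sym) : P ⊆ stopPath t S cs T O P := by
  induction T generalizing P with
  | leaf b => simp [stopPath]
  | node s t0 t1 ih0 ih1 =>
    simp only [stopPath]
    split
    · exact Finset.Subset.refl P
    · split
      · exact (Finset.subset_insert s P).trans (ih1 _)
      · exact (Finset.subset_insert s P).trans (ih0 _)

lemma stopPath_subset (t : ℕ) (S cs : Finset Sym) (T : DTree Sym β) (O : Sym → Bool)
    (P : Finset Sym) : stopPath t S cs T O P ⊆ P ∪ T.path O := by
  induction T generalizing P with
  | leaf b => simp [stopPath]
  | node s t0 t1 ih0 ih1 =>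
    simp only [stopPath, DTree.path]
    split
    · exact Finset.subset_union_left
    · split
      · refine (ih1 _).trans ?_
        intro x hx
        simp only [Finset.mem_union, Finset.mem_insert] at hx ⊢
        tauto
      · refine (ih0 _).trans ?_
        intro x hx
        simp only [Finset.mem_union, Finset.mem_insert] at hx ⊢
        tauto

lemma le_card_stopPath (t : ℕ) (S cs : Finset Sym) (T : DTree Sym β) (O : Sym → Bool)
    (P : Finset Sym) (h : t ≤ (cs ∩ (S ∪ (P ∪ T.path O))).card) :
    t ≤ (cs ∩ (S ∪ stopPath t S cs T O P)).card := by
  induction T generalizing P with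
  | leaf b =>
    simpa [stopPath, DTree.path] using h
  | node s t0 t1 ih0 ih1 =>
    simp only [stopPath]
    split
    · assumption
    · simp only [DTree.path] at h
      split
      · rename_i hOs
        apply ih1
        have hset : S ∪ (insert s P ∪ DTree.path t1 O)
            = S ∪ (P ∪ insert s (if O s then DTree.path t1 O else DTree.path t0 O)) := by
          ext x
          simp only [Finset.mem_union, Finset.mem_insert, hOs, if_true]
          tauto
        rw [hset]
        exact h
      · rename_i hOs
        apply ih0
        have hset : S ∪ (insert s P ∪ DTree.path t0 O)
            = S ∪ (P ∪ insert s (if O s then DTree.path t1 O else DTree.path t0 O)) := by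
          ext x
          simp only [Finset.mem_union, Finset.mem_insert, hOs, if_false]
          tauto
        rw [hset]
        exact h

lemma card_stopPath_le (t : ℕ) (S cs : Finset Sym) (T : DTree Sym β) (O : Sym → Bool)
    (P : Finset Sym) (h : (cs ∩ (S ∪ P)).card ≤ t) :
    (cs ∩ (S ∪ stopPath t S cs T O P)).card ≤ t := by
  induction T generalizing P with
  | leaf b => simpa [stopPath] using h
  | node s t0 t1 ih0 ih1 =>
    simp only [stopPath]
    split
    · exact h
    · rename_i hlt
      push_neg at hlt
      have hstep : (cs ∩ (S ∪ insert s P)).card ≤ t := by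
        have hsub : cs ∩ (S ∪ insert s P) ⊆ insert s (cs ∩ (S ∪ P)) := by
          intro x hx
          simp only [Finset.mem_inter, Finset.mem_union, Finset.mem_insert] at hx ⊢
          tauto
        calc (cs ∩ (S ∪ insert s P)).card ≤ (insert s (cs ∩ (S ∪ P))).card :=
              Finset.card_le_card hsub
          _ ≤ (cs ∩ (S ∪ P)).card + 1 := Finset.card_insert_le _ _
          _ ≤ t := by omega
      split
      · exact ih1 _ hstep
      · exact ih0 _ hstep

lemma stopPath_congr (t : ℕ) (S cs : Finset Sym) (T : DTree Sym β) (O O' : Sym → Bool)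
    (P : Finset Sym) (h : ∀ x ∈ stopPath t S cs T O P, O' x = O x) :
    stopPath t S cs T O' P = stopPath t S cs T O P := by
  induction T generalizing P with
  | leaf b => simp [stopPath]
  | node s t0 t1 ih0 ih1 =>
    by_cases hc : t ≤ (cs ∩ (S ∪ P)).card
    · simp [stopPath, hc]
    · simp only [stopPath, if_neg hc] at h ⊢
      by_cases hOs : O s
      · simp only [hOs, if_true] at h ⊢
        have hsmem : s ∈ stopPath t S cs t1 O (insert s P) :=
          subset_stopPath t S cs t1 O (insert s P) (Finset.mem_insert_self s P)
        have hOs' : O' s = O s := h s hsmem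
        rw [hOs] at hOs'
        simp only [hOs', if_true]
        exact ih1 _ h
      · simp only [hOs, if_false] at h ⊢
        have hsmem : s ∈ stopPath t S cs t0 O (insert s P) :=
          subset_stopPath t S cs t0 O (insert s P) (Finset.mem_insert_self s P)
        have hOs' : O' s = O s := h s hsmem
        rw [Bool.not_eq_true] at hOs
        rw [hOs] at hOs'
        simp only [hOs', if_false]
        exact ih0 _ h

/-- The number of oracles agreeing with `O` outside `F` is `2 ^ |F|`. -/
lemma card_agree_outside [Fintype Sym] (F : Finset Sym) (O : Sym → Bool) :
    (Finset.univ.filter fun O' : Sym → Bool => ∀ x, x ∉ F → O' x = O x).card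
      = 2 ^ F.card := by
  have := Finset.card_bij'
    (s := Finset.univ.filter fun O' : Sym → Bool => ∀ x, x ∉ F → O' x = O x)
    (t := F.pi fun _ => (Finset.univ : Finset Bool))
    (fun O' _ => fun x _ => O' x)
    (fun g _ => fun x => if hx : x ∈ F then g x hx else O x)
    (fun O' h => by simp [Finset.mem_pi])
    (fun g hg => by
      simp only [Finset.mem_filter, Finset.mem_univ, true_and]
      intro x hx
      simp [hx])
    (fun O' h => by
      funext x
      by_cases hx : x ∈ F
      · simp [hx]
      · simp only [Finset.mem_filter, Finset.mem_univ, true_and] at h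
        simp [hx, h x hx])
    (fun g hg => by
      funext x hx
      simp [hx])
  rw [this, Finset.card_pi]
  simp

end ClaimAux

/-- **Claim 4.5.** Let `c ∈ C` be a codeword that is not `t`-queried by `S`, and let
`Q(c,O)` be the event that `c` is `t`-queried by `S ∪ path(T,O)`. Then, conditioned on
`Q(c,O)` and on `O` agreeing with the partial oracle `O_S` on `S`, the probability that
`O(c₁) = ⋯ = O(cₙ) = 0` is at most `2^{-(n-t)}`. -/
theorem many_free_bits
    {n : ℕ} (hn : 1 ≤ n) [Fintype Sym] [DecidableEq Sym]
    (A : Fin n → Finset Sym)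
    (hdisj : ∀ i j : Fin n, i ≠ j → Disjoint (A i) (A j))
    (C : Finset (Fin n → Sym)) (hC : ∀ c ∈ C, ∀ i, c i ∈ A i)
    (t : ℕ) (ht : t ≤ n)
    (T : DTree Sym (Fin n → Sym))
    (S : Finset Sym) (OS : Sym → Bool)
    (c : Fin n → Sym) (hcC : c ∈ C) (hcnot : ¬ tQueried t S c)
    (hpos : 0 < prOracle (fun O : Sym → Bool =>
        tQueried t (S ∪ T.path O) c ∧ ∀ x ∈ S, O x = OS x)) :
    prOracle (fun O : Sym → Bool =>
        (∀ i, O (c i) = false) ∧ tQueried t (S ∪ T.path O) c ∧ ∀ x ∈ S, O x = OS x) /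
      prOracle (fun O : Sym → Bool => tQueried t (S ∪ T.path O) c ∧ ∀ x ∈ S, O x = OS x) ≤
      (2 : ℝ) ^ (-((n : ℤ) - (t : ℤ))) := by
  classical
  -- `c` is injective since its coordinates lie in pairwise disjoint alphabets.
  have hinj : Function.Injective c := by
    intro i j hij
    by_contra hne
    exact (Finset.disjoint_left.1 (hdisj i j hne)) (hC c hcC i) (hij ▸ hC c hcC j)
  set cs : Finset Sym := symbSet c with hcs
  have hcsn : cs.card = n := by
    rw [hcs, symbSet, Finset.card_image_of_injective _ hinj, Finset.card_univ,
      Fintype.card_fin]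
  set E : Finset (Sym → Bool) := Finset.univ.filter fun O : Sym → Bool =>
      tQueried t (S ∪ T.path O) c ∧ ∀ x ∈ S, O x = OS x with hE
  set D : Finset (Sym → Bool) := Finset.univ.filter fun O : Sym → Bool =>
      (∀ i, O (c i) = false) ∧ tQueried t (S ∪ T.path O) c ∧ ∀ x ∈ S, O x = OS x with hD
  -- the stopped path and the free symbols of an oracle
  set Pstar : (Sym → Bool) → Finset Sym := fun O => stopPath t S cs T O ∅ with hPstar
  set F : (Sym → Bool) → Finset Sym := fun O => cs \ (S ∪ Pstar O) with hF
  set G : (Sym → Bool) → Finset (Sym → Bool) := fun O =>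
      Finset.univ.filter fun O' : Sym → Bool => ∀ x, x ∉ F O → O' x = O x with hG
  -- for oracles in the event, exactly `t` symbols of `c` are covered at the stopping time
  have hstop_card : ∀ O : Sym → Bool, tQueried t (S ∪ T.path O) c →
      (cs ∩ (S ∪ Pstar O)).card = t := by
    intro O hQ
    refine le_antisymm ?_ ?_
    · apply card_stopPath_le
      have : (cs ∩ (S ∪ (∅ : Finset Sym))).card = (cs ∩ S).card := by
        rw [Finset.union_empty]
      rw [this, hcs]
      have := hcnot
      unfold tQueried at this
      omega
    · apply le_card_stopPath
      have : S ∪ ((∅ : Finset Sym) ∪ T.path O) = S ∪ T.path O := by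
        rw [Finset.empty_union]
      rw [this]
      exact hQ
  have hF_card : ∀ O : Sym → Bool, tQueried t (S ∪ T.path O) c → (F O).card = n - t := by
    intro O hQ
    have hset : F O = cs \ (cs ∩ (S ∪ Pstar O)) := by
      simp only [hF]
      ext x
      simp only [Finset.mem_sdiff, Finset.mem_inter]
      tauto
    rw [hset, Finset.card_sdiff_of_subset Finset.inter_subset_left, hstop_card O hQ, hcsn]
  -- if `O'` agrees with `O` outside the free symbols, the stopped path is unchanged
  have hstop_eq : ∀ O O' : Sym → Bool, (∀ x, x ∉ F O → O' x = O x) →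
      Pstar O' = Pstar O := by
    intro O O' hagree
    apply stopPath_congr
    intro x hx
    apply hagree
    simp only [hF, Finset.mem_sdiff, not_and, not_not]
    intro _
    exact Finset.mem_union_right _ hx
  -- each `G O` is contained in the event `E`
  have hG_subset : ∀ O ∈ D, G O ⊆ E := by
    intro O hOD O' hO'
    simp only [hD, Finset.mem_filter, Finset.mem_univ, true_and] at hOD
    obtain ⟨hzero, hQ, hagreeS⟩ := hOD
    simp only [hG, Finset.mem_filter, Finset.mem_univ, true_and] at hO'
    have hP : Pstar O' = Pstar O := hstop_eq O O' hO'
    simp only [hE, Finset.mem_filter, Finset.mem_univ, true_and]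
    constructor
    · unfold tQueried
      have h1 : t ≤ (cs ∩ (S ∪ Pstar O)).card := (hstop_card O hQ).ge
      have h2 : Pstar O' ⊆ T.path O' := by
        have := stopPath_subset t S cs T O' ∅
        rwa [Finset.empty_union] at this
      refine h1.trans (Finset.card_le_card ?_)
      rw [← hP]
      intro x hx
      simp only [Finset.mem_inter, Finset.mem_union] at hx ⊢
      rcases hx with ⟨hx1, hx2 | hx2⟩
      · exact ⟨hx1, Or.inl hx2⟩
      · exact ⟨hx1, Or.inr (h2 hx2)⟩
    · intro x hxS
      have hxnF : x ∉ F O := by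
        simp only [hF, Finset.mem_sdiff, not_and, not_not]
        intro _
        exact Finset.mem_union_left _ hxS
      rw [hO' x hxnF]
      exact hagreeS x hxS
  -- the sets `G O` for `O ∈ D` are pairwise disjoint
  have hG_disj : ∀ O₁ ∈ D, ∀ O₂ ∈ D, O₁ ≠ O₂ → Disjoint (G O₁) (G O₂) := by
    intro O₁ h1 O₂ h2 hne
    rw [Finset.disjoint_left]
    intro O' hO'1 hO'2
    apply hne
    simp only [hD, Finset.mem_filter, Finset.mem_univ, true_and] at h1 h2
    simp only [hG, Finset.mem_filter, Finset.mem_univ, true_and] at hO'1 hO'2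
    have hP1 : Pstar O' = Pstar O₁ := hstop_eq O₁ O' hO'1
    have hP2 : Pstar O' = Pstar O₂ := hstop_eq O₂ O' hO'2
    have hPF : F O₁ = F O₂ := by simp only [hF, ← hP1, ← hP2]
    funext x
    by_cases hx : x ∈ F O₁
    · have hxcs : x ∈ cs := (Finset.mem_sdiff.1 hx).1
      obtain ⟨i, _, rfl⟩ := Finset.mem_image.1 hxcs
      rw [h1.1 i, h2.1 i]
    · rw [← hO'1 x hx, hO'2 x (hPF ▸ hx)]
  -- the counting bound
  have hcount : D.card * 2 ^ (n - t) ≤ E.card := by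
    have hbu : (D.biUnion G).card = D.card * 2 ^ (n - t) := by
      rw [Finset.card_biUnion hG_disj]
      rw [Finset.sum_congr rfl (fun O hOD => ?_), Finset.sum_const, smul_eq_mul]
      have hQ : tQueried t (S ∪ T.path O) c := by
        simp only [hD, Finset.mem_filter] at hOD
        exact hOD.2.2.1
      rw [hG]
      rw [card_agree_outside (F O) O, hF_card O hQ]
    rw [← hbu]
    exact Finset.card_le_card (Finset.biUnion_subset.2 hG_subset)
  -- arithmetic conclusion
  have hpr : ∀ (p : (Sym → Bool) → Prop) (s : Finset (Sym → Bool)), (∀ O, p O ↔ O ∈ s) →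
      prOracle p = (s.card : ℝ) / (Fintype.card (Sym → Bool)) := by
    intro p s hps
    unfold prOracle
    congr 1
    · norm_cast
      apply Finset.card_bij (fun a _ => a)
      · intro a ha
        rw [Finset.mem_filter] at ha
        exact (hps a).1 ha.2
      · intro a _ b _ h
        exact h
      · intro b hb
        refine ⟨b, ?_, rfl⟩
        rw [Finset.mem_filter]
        refine ⟨?_, (hps b).2 hb⟩
        simp only [Finset.mem_univ]
    · norm_cast
      congr 1
      exact Subsingleton.elim _ _
  rw [hpr _ E (fun O => by simp only [hE, Finset.mem_filter, Finset.mem_univ, true_and])]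
    at hpos
  rw [hpr _ D (fun O => by simp only [hD, Finset.mem_filter, Finset.mem_univ, true_and]),
      hpr _ E (fun O => by simp only [hE, Finset.mem_filter, Finset.mem_univ, true_and])]
  set N : ℝ := (Fintype.card (Sym → Bool) : ℝ) with hN
  have hNpos : 0 < N := by
    rw [hN]
    exact_mod_cast Fintype.card_pos
  have hEpos : (0 : ℝ) < E.card := by
    rcases div_pos_iff.mp hpos with ⟨h1, _⟩ | ⟨_, h2⟩
    · exact h1
    · linarith
  have hdiv : ((D.card : ℝ) / N) / ((E.card : ℝ) / N) = (D.card : ℝ) / E.card := by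
    field_simp
  rw [hdiv]
  have hexp : (2 : ℝ) ^ (-((n : ℤ) - (t : ℤ))) = ((2 : ℝ) ^ (n - t))⁻¹ := by
    have h1 : -((n : ℤ) - (t : ℤ)) = -((n - t : ℕ) : ℤ) := by omega
    rw [h1, zpow_neg, zpow_natCast]
  rw [hexp, div_le_iff₀ hEpos, inv_mul_eq_div, le_div_iff₀ (by positivity)]
  calc (D.card : ℝ) * 2 ^ (n - t) = ((D.card * 2 ^ (n - t) : ℕ) : ℝ) := by push_cast; ring
    _ ≤ (E.card : ℝ) := by exact_mod_cast hcount
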